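/- arXiv:1610.06058 — 2 statements merged into one kernel-verified Lean document; each statement's English description precedes it below -/
import Mathlib

section
/- For every finite simple graph G, the number of maximal independent sets of G is at most 3^ν(G), where ν(G) is the matching number of G. -/
variable {V : Type*}

/-- `S` is an independent set of `G`: no two vertices of `S` are adjacent. -/
def IsIndepSet (G : SimpleGraph V) (S : Set V) : Prop :=
  ∀ ⦃u v : V⦄, u ∈ S → v ∈ S → ¬ G.Adj u v

/-- `S` is a maximal independent set of `G`. -/
def IsMaxIndepSet (G : SimpleGraph V) (S : Set V) : Prop :=
  IsIndepSet G S ∧ ∀ T : Set V, IsIndepSet G T → S ⊆ T → S = T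

/-- `m(G)`: the number of maximal independent sets of `G`. -/
noncomputable def numMaxIndep (G : SimpleGraph V) : ℕ :=
  {S : Set V | IsMaxIndepSet G S}.ncard

/-- `C` is a vertex cover of `G`: every edge has at least one endpoint in `C`. -/
def IsVertexCover (G : SimpleGraph V) (C : Set V) : Prop :=
  ∀ ⦃u v : V⦄, G.Adj u v → u ∈ C ∨ v ∈ C

/-- `β(G)`: the minimum size of a vertex cover of `G`. -/
noncomputable def coverNumber (G : SimpleGraph V) : ℕ :=
  sInf {n : ℕ | ∃ C : Set V, IsVertexCover G C ∧ C.ncard = n}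

/-- `M` is a matching of `G`: a set of edges of `G`, pairwise sharing no vertex. -/
def IsMatching (G : SimpleGraph V) (M : Set (Sym2 V)) : Prop :=
  M ⊆ G.edgeSet ∧ ∀ e ∈ M, ∀ f ∈ M, e ≠ f → ∀ v : V, v ∈ e → v ∉ f

/-- `M` is an induced matching of `G`: a matching such that no two distinct
edges of `M` are joined by an edge of `G`. -/
def IsInducedMatching (G : SimpleGraph V) (M : Set (Sym2 V)) : Prop :=
  IsMatching G M ∧ ∀ e ∈ M, ∀ f ∈ M, e ≠ f → ∀ u v : V, u ∈ e → v ∈ f → ¬ G.Adj u v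

/-- `ν(G)`: the maximum size of a matching of `G`. -/
noncomputable def matchingNumber (G : SimpleGraph V) : ℕ :=
  sSup {n : ℕ | ∃ M : Set (Sym2 V), IsMatching G M ∧ M.ncard = n}

/-- `ν₀(G)`: the maximum size of an induced matching of `G`. -/
noncomputable def inducedMatchingNumber (G : SimpleGraph V) : ℕ :=
  sSup {n : ℕ | ∃ M : Set (Sym2 V), IsInducedMatching G M ∧ M.ncard = n}

/-- `G` is bipartite: the vertices split into two sides with every edge crossing. -/
def IsBipartite (G : SimpleGraph V) : Prop :=
  ∃ A : Set V, ∀ ⦃u v : V⦄, G.Adj u v → (u ∈ A ↔ v ∉ A)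

/-- vertices covered by a set of edges -/
def mSupp (M : Set (Sym2 V)) : Set V := {v | ∃ e ∈ M, v ∈ e}

set_option linter.unusedSectionVars false

section aux
variable [Fintype V] (G : SimpleGraph V)

lemma matchingSet_nonempty :
    {n : ℕ | ∃ M : Set (Sym2 V), IsMatching G M ∧ M.ncard = n}.Nonempty :=
  ⟨0, ∅, ⟨Set.empty_subset _, by simp⟩, by simp⟩

lemma matchingSet_bdd :
    BddAbove {n : ℕ | ∃ M : Set (Sym2 V), IsMatching G M ∧ M.ncard = n} := by
  refine ⟨Nat.card (Sym2 V), ?_⟩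
  rintro n ⟨M, _, rfl⟩
  have := Set.ncard_le_ncard (Set.subset_univ M) (Set.toFinite _)
  simpa [Set.ncard_univ] using this

lemma exists_max_matching :
    ∃ M : Set (Sym2 V), IsMatching G M ∧ M.ncard = matchingNumber G := by
  have := Nat.sSup_mem (matchingSet_nonempty G) (matchingSet_bdd G)
  exact this

/-- no edge between two unmatched vertices, for a maximum matching -/
lemma no_edge_unmatched {M : Set (Sym2 V)} (hM : IsMatching G M)
    (hcard : M.ncard = matchingNumber G) {v w : V}
    (hv : v ∉ mSupp M) (hw : w ∉ mSupp M) : ¬ G.Adj v w := by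
  intro hadj
  have hne : s(v,w) ∉ M := fun h => hv ⟨s(v,w), h, by simp⟩
  have hM' : IsMatching G (insert s(v,w) M) := by
    constructor
    · exact Set.insert_subset (G.mem_edgeSet.mpr hadj) hM.1
    · rintro e (rfl | he) f (rfl | hf) hef x hxe hxf
      · exact hef rfl
      · exact hw (by rcases Sym2.mem_iff.mp hxe with rfl | rfl
                     · exact absurd ⟨f, hf, hxf⟩ hv
                     · exact ⟨f, hf, hxf⟩)
      · rcases Sym2.mem_iff.mp hxf with rfl | rfl
        · exact hv ⟨e, he, hxe⟩
        · exact hw ⟨e, he, hxe⟩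
      · exact hM.2 e he f hf hef x hxe hxf
  have h1 : (insert s(v,w) M).ncard = M.ncard + 1 :=
    Set.ncard_insert_of_notMem hne (Set.toFinite _)
  have h2 : (insert s(v,w) M).ncard ≤ matchingNumber G :=
    le_csSup (matchingSet_bdd G) ⟨_, hM', rfl⟩
  omega

/-- a maximal independent set is determined by its trace on matched vertices -/
lemma trace_determines {M : Set (Sym2 V)} (hM : IsMatching G M)
    (hcard : M.ncard = matchingNumber G) {S₁ S₂ : Set V}
    (h₁ : IsMaxIndepSet G S₁) (h₂ : IsMaxIndepSet G S₂)
    (h : S₁ ∩ mSupp M = S₂ ∩ mSupp M) : S₁ ⊆ S₂ := by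
  intro v hv
  by_cases hvs : v ∈ mSupp M
  · have : v ∈ S₂ ∩ mSupp M := h ▸ ⟨hv, hvs⟩
    exact this.1
  · by_contra hv2
    have hnotind : ¬ IsIndepSet G (insert v S₂) := by
      intro hind
      exact hv2 ((h₂.2 _ hind (Set.subset_insert _ _)) ▸ Set.mem_insert v S₂)
    rw [IsIndepSet] at hnotind
    push_neg at hnotind
    obtain ⟨a, b, ha, hb, hab⟩ := hnotind
    -- one of a,b is v, the other in S₂
    have key : ∃ w ∈ S₂, G.Adj v w := by
      rcases ha with rfl | ha
      · rcases hb with rfl | hb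
        · exact absurd hab (G.loopless.irrefl _)
        · exact ⟨b, hb, hab⟩
      · rcases hb with rfl | hb
        · exact ⟨a, ha, hab.symm⟩
        · exact absurd hab (h₂.1 ha hb)
    obtain ⟨w, hw, hadj⟩ := key
    by_cases hws : w ∈ mSupp M
    · have : w ∈ S₁ ∩ mSupp M := h ▸ ⟨hw, hws⟩
      exact h₁.1 hv this.1 hadj
    · exact no_edge_unmatched G hM hcard hvs hws hadj

end aux

/-- For every finite simple graph `G`, `m(G) ≤ 3 ^ ν(G)`. -/
theorem numMaxIndep_le_three_pow_matchingNumber [Fintype V] (G : SimpleGraph V) :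
    numMaxIndep G ≤ 3 ^ matchingNumber G := by
  classical
  obtain ⟨M, hM, hcard⟩ := exists_max_matching G
  -- the encoding map
  set Φ : Set V → (M → Fin 3) := fun S e =>
    if (e : Sym2 V).out.1 ∈ S then 1 else if (e : Sym2 V).out.2 ∈ S then 2 else 0 with hΦ
  -- Φ determines the trace on matched vertices, for independent sets
  have trace_sub : ∀ S₁ S₂ : Set V, IsIndepSet G S₁ → Φ S₁ = Φ S₂ →
      S₁ ∩ mSupp M ⊆ S₂ ∩ mSupp M := by
    intro S₁ S₂ hind heq v ⟨hv, e, he, hve⟩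
    have hadj : G.Adj (e.out.1) (e.out.2) := by
      have := hM.1 he; rwa [← e.out_eq] at this
    have hmem : v = e.out.1 ∨ v = e.out.2 := by
      rw [← e.out_eq] at hve; exact Sym2.mem_iff.mp hve
    have happ := congrFun heq ⟨e, he⟩
    simp only [hΦ] at happ
    rcases hmem with rfl | rfl
    · rw [if_pos hv] at happ
      by_cases h2 : e.out.1 ∈ S₂
      · exact ⟨h2, e, he, hve⟩
      · rw [if_neg h2] at happ
        split at happ <;> simp_all
    · have h1 : e.out.1 ∉ S₁ := fun h => hind h hv hadj
      rw [if_neg h1, if_pos hv] at happ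
      by_cases h2 : e.out.1 ∈ S₂
      · rw [if_pos h2] at happ; simp_all
      · rw [if_neg h2] at happ
        by_cases h3 : e.out.2 ∈ S₂
        · exact ⟨h3, e, he, hve⟩
        · rw [if_neg h3] at happ; simp_all
  have hinj : Set.InjOn Φ {S : Set V | IsMaxIndepSet G S} := by
    intro S₁ h₁ S₂ h₂ heq
    have htr : S₁ ∩ mSupp M = S₂ ∩ mSupp M :=
      Set.Subset.antisymm (trace_sub S₁ S₂ h₁.1 heq) (trace_sub S₂ S₁ h₂.1 heq.symm)
    exact Set.Subset.antisymm (trace_determines G hM hcard h₁ h₂ htr)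
      (trace_determines G hM hcard h₂ h₁ htr.symm)
  have hcount : {S : Set V | IsMaxIndepSet G S}.ncard ≤
      (Set.univ : Set (M → Fin 3)).ncard :=
    Set.ncard_le_ncard_of_injOn Φ (fun S _ => Set.mem_univ _) hinj (Set.toFinite _)
  rw [numMaxIndep]
  calc {S : Set V | IsMaxIndepSet G S}.ncard
      ≤ (Set.univ : Set (M → Fin 3)).ncard := hcount
    _ = 3 ^ matchingNumber G := by
        rw [Set.ncard_univ, Nat.card_fun, Nat.card_coe_set_eq, hcard,
          Nat.card_eq_fintype_card, Fintype.card_fin]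
end

section
/- If G is a finite simple bipartite graph whose induced matching number equals its matching number (a Cameron-Walker bipartite graph), then the number of maximal independent sets of G equals 2^β(G), where β(G) is the covering number of G. -/
variable {V : Type*}

section Aux
variable [Fintype V] {G : SimpleGraph V} {M : Set (Sym2 V)} {A : Set V}

lemma isInducedMatching_empty (G : SimpleGraph V) : IsInducedMatching G (∅ : Set (Sym2 V)) :=
  ⟨⟨Set.empty_subset _, by simp⟩, by simp⟩

lemma cover_lemma (hM : IsInducedMatching G M)
    (hmax : ∀ M' : Set (Sym2 V), IsMatching G M' → M'.ncard ≤ M.ncard)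
    {u v : V} (huv : G.Adj u v) : (∃ e ∈ M, u ∈ e) ∨ (∃ e ∈ M, v ∈ e) := by
  by_contra h
  push_neg at h
  obtain ⟨hu, hv⟩ := h
  have hnotmem : s(u, v) ∉ M := fun hm => hu _ hm (by simp)
  have hmatch : IsMatching G (insert s(u, v) M) := by
    constructor
    · intro e he
      rcases Set.mem_insert_iff.mp he with rfl | he
      · exact huv
      · exact hM.1.1 he
    · intro e he f hf hef w hwe hwf
      rcases Set.mem_insert_iff.mp he with rfl | he2 <;>
        rcases Set.mem_insert_iff.mp hf with rfl | hf2
      · exact hef rfl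
      · rcases Sym2.mem_iff.mp hwe with rfl | rfl
        · exact hu _ hf2 hwf
        · exact hv _ hf2 hwf
      · rcases Sym2.mem_iff.mp hwf with rfl | rfl
        · exact hu _ he2 hwe
        · exact hv _ he2 hwe
      · exact hM.1.2 e he2 f hf2 hef w hwe hwf
  have h2 := hmax _ hmatch
  rw [Set.ncard_insert_of_notMem hnotmem (Set.toFinite _)] at h2
  omega

lemma both_ends_lemma (hM : IsInducedMatching G M)
    (hmax : ∀ M' : Set (Sym2 V), IsMatching G M' → M'.ncard ≤ M.ncard)
    (hA : ∀ ⦃u v : V⦄, G.Adj u v → (u ∈ A ↔ v ∉ A))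
    {u v u' v' : V} (he : s(u, v) ∈ M)
    (hu' : G.Adj u u') (hv' : G.Adj v v')
    (hu'e : u' ∉ s(u, v)) (hv'e : v' ∉ s(u, v)) : False := by
  have huv : G.Adj u v := hM.1.1 he
  have hu'M : ∀ f ∈ M, u' ∉ f := by
    intro f hf hu'f
    rcases eq_or_ne (s(u, v) : Sym2 V) f with rfl | hne
    · exact hu'e hu'f
    · exact hM.2 _ he _ hf hne u u' (by simp) hu'f hu'
  have hv'M : ∀ f ∈ M, v' ∉ f := by
    intro f hf hv'f
    rcases eq_or_ne (s(u, v) : Sym2 V) f with rfl | hne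
    · exact hv'e hv'f
    · exact hM.2 _ he _ hf hne v v' (by simp) hv'f hv'
  have hu'u : u' ≠ u := by rintro rfl; simp at hu'e
  have hu'v : u' ≠ v := by rintro rfl; simp at hu'e
  have hv'u : v' ≠ u := by rintro rfl; simp at hv'e
  have hv'v : v' ≠ v := by rintro rfl; simp at hv'e
  have huvne : u ≠ v := huv.ne
  have hu'v' : u' ≠ v' := by
    rintro rfl
    have h1 := hA huv
    have h2 := hA hu'
    have h3 := hA hv'
    tauto
  have hu_not : ∀ f ∈ M, f ≠ s(u, v) → u ∉ f := fun f hf hne =>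
    hM.1.2 _ he _ hf (Ne.symm hne) u (by simp)
  have hv_not : ∀ f ∈ M, f ≠ s(u, v) → v ∉ f := fun f hf hne =>
    hM.1.2 _ he _ hf (Ne.symm hne) v (by simp)
  have hmem1 : ∀ w, w ∈ (s(u, u') : Sym2 V) → ∀ f ∈ M, f ≠ s(u, v) → w ∉ f := by
    intro w hw f hf hne
    rcases Sym2.mem_iff.mp hw with rfl | rfl
    · exact hu_not f hf hne
    · exact hu'M f hf
  have hmem2 : ∀ w, w ∈ (s(v, v') : Sym2 V) → ∀ f ∈ M, f ≠ s(u, v) → w ∉ f := by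
    intro w hw f hf hne
    rcases Sym2.mem_iff.mp hw with rfl | rfl
    · exact hv_not f hf hne
    · exact hv'M f hf
  have h12 : ∀ w, w ∈ (s(u, u') : Sym2 V) → w ∉ (s(v, v') : Sym2 V) := by
    intro w hw
    rcases Sym2.mem_iff.mp hw with rfl | rfl <;> simp only [Sym2.mem_iff] <;> tauto
  have hmatch : IsMatching G (insert s(u, u') (insert s(v, v') (M \ {s(u, v)}))) := by
    constructor
    · intro e he'
      simp only [Set.mem_insert_iff, Set.mem_diff, Set.mem_singleton_iff] at he'
      rcases he' with rfl | rfl | ⟨heM, _⟩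
      · exact hu'
      · exact hv'
      · exact hM.1.1 heM
    · intro e heM' f hfM' hef w hwe hwf
      simp only [Set.mem_insert_iff, Set.mem_diff, Set.mem_singleton_iff] at heM' hfM'
      rcases heM' with rfl | rfl | ⟨heM, hene⟩ <;> rcases hfM' with rfl | rfl | ⟨hfM, hfne⟩
      · exact hef rfl
      · exact h12 w hwe hwf
      · exact hmem1 w hwe f hfM hfne hwf
      · exact h12 w hwf hwe
      · exact hef rfl
      · exact hmem2 w hwe f hfM hfne hwf
      · exact hmem1 w hwf e heM hene hwe
      · exact hmem2 w hwf e heM hene hwe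
      · exact hM.1.2 e heM f hfM hef w hwe hwf
  have hvv'notmem : s(v, v') ∉ M \ {s(u, v)} := fun h => hv'M _ h.1 (by simp)
  have huu'notmem : s(u, u') ∉ insert s(v, v') (M \ {s(u, v)}) := by
    intro h
    rcases Set.mem_insert_iff.mp h with h | h
    · rw [Sym2.eq_iff] at h
      tauto
    · exact hu'M _ h.1 (by simp)
  have hpos : 0 < M.ncard := (Set.ncard_pos (Set.toFinite _)).mpr ⟨_, he⟩
  have hdcard : (M \ {s(u, v)}).ncard = M.ncard - 1 :=
    Set.ncard_diff_singleton_of_mem he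
  have h2 := hmax _ hmatch
  rw [Set.ncard_insert_of_notMem huu'notmem (Set.toFinite _),
    Set.ncard_insert_of_notMem hvv'notmem (Set.toFinite _), hdcard] at h2
  omega

lemma maxIndep_dominates {S : Set V} (hS : IsMaxIndepSet G S) {w : V} (hw : w ∉ S) :
    ∃ u ∈ S, G.Adj w u := by
  by_contra h
  push_neg at h
  have hind : IsIndepSet G (insert w S) := by
    intro x y hx hy hadj
    rcases Set.mem_insert_iff.mp hx with rfl | hx2 <;> rcases Set.mem_insert_iff.mp hy with rfl | hy2
    · exact G.loopless.irrefl _ hadj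
    · exact h y hy2 hadj
    · exact h x hx2 hadj.symm
    · exact hS.1 hx2 hy2 hadj
  have heq := hS.2 _ hind (Set.subset_insert _ _)
  exact hw (heq ▸ Set.mem_insert w S)

lemma exactly_one (hM : IsInducedMatching G M)
    (hmax : ∀ M' : Set (Sym2 V), IsMatching G M' → M'.ncard ≤ M.ncard)
    (hA : ∀ ⦃u v : V⦄, G.Adj u v → (u ∈ A ↔ v ∉ A))
    {S : Set V} (hS : IsMaxIndepSet G S) {u v : V} (he : s(u, v) ∈ M) :
    u ∈ S ↔ v ∉ S := by
  have huv : G.Adj u v := hM.1.1 he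
  constructor
  · intro hu hv
    exact hS.1 hu hv huv
  · intro hv
    by_contra hu
    obtain ⟨u', hu'S, hu'⟩ := maxIndep_dominates hS hu
    obtain ⟨v', hv'S, hv'⟩ := maxIndep_dominates hS hv
    have hu'e : u' ∉ (s(u, v) : Sym2 V) := by
      intro hmem
      rcases Sym2.mem_iff.mp hmem with rfl | rfl
      · exact G.loopless.irrefl _ hu'
      · exact hv hu'S
    have hv'e : v' ∉ (s(u, v) : Sym2 V) := by
      intro hmem
      rcases Sym2.mem_iff.mp hmem with rfl | rfl
      · exact hu hv'S
      · exact G.loopless.irrefl _ hv'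
    exact both_ends_lemma hM hmax hA he hu' hv' hu'e hv'e

lemma exists_maxIndep_superset (G : SimpleGraph V) {C : Set V} (hC : IsIndepSet G C) :
    ∃ S : Set V, IsMaxIndepSet G S ∧ C ⊆ S := by
  obtain ⟨S, hS, hmax⟩ := Set.Finite.exists_maximalFor Set.ncard
    {T : Set V | IsIndepSet G T ∧ C ⊆ T} (Set.toFinite _) ⟨C, hC, subset_rfl⟩
  refine ⟨S, ⟨hS.1, ?_⟩, hS.2⟩
  intro T hT hST
  have hle := hmax (j := T) ⟨hT, hS.2.trans hST⟩ (Set.ncard_le_ncard hST (Set.toFinite _))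
  exact Set.eq_of_subset_of_ncard_le hST hle.ge (Set.toFinite _)

end Aux

/-- If `G` is a Cameron-Walker bipartite graph, then
`m(G) = 2 ^ β(G)`. -/
theorem numMaxIndep_eq_two_pow_coverNumber_of_cameronWalker_bipartite
    [Fintype V] (G : SimpleGraph V)
    (hbip : IsBipartite G) (hCW : inducedMatchingNumber G = matchingNumber G) :
    numMaxIndep G = 2 ^ coverNumber G := by
  classical
  obtain ⟨A, hA⟩ := hbip
  -- obtain a maximum induced matching M
  have hbddi : BddAbove {n : ℕ | ∃ M : Set (Sym2 V), IsInducedMatching G M ∧ M.ncard = n} := by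
    refine ⟨Nat.card (Sym2 V), ?_⟩
    rintro n ⟨M, _, rfl⟩
    calc M.ncard ≤ (Set.univ : Set (Sym2 V)).ncard :=
          Set.ncard_le_ncard (Set.subset_univ _) (Set.toFinite _)
      _ = Nat.card (Sym2 V) := Set.ncard_univ _
  have hbddm : BddAbove {n : ℕ | ∃ M : Set (Sym2 V), IsMatching G M ∧ M.ncard = n} := by
    refine ⟨Nat.card (Sym2 V), ?_⟩
    rintro n ⟨M, _, rfl⟩
    calc M.ncard ≤ (Set.univ : Set (Sym2 V)).ncard :=
          Set.ncard_le_ncard (Set.subset_univ _) (Set.toFinite _)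
      _ = Nat.card (Sym2 V) := Set.ncard_univ _
  obtain ⟨M, hM, hMcard⟩ : inducedMatchingNumber G ∈
      {n : ℕ | ∃ M : Set (Sym2 V), IsInducedMatching G M ∧ M.ncard = n} :=
    Nat.sSup_mem ⟨0, ∅, isInducedMatching_empty G, by simp⟩ hbddi
  -- M is a maximum matching
  have hmax : ∀ M' : Set (Sym2 V), IsMatching G M' → M'.ncard ≤ M.ncard := by
    intro M' hM'
    have h2 : M'.ncard ≤ matchingNumber G := le_csSup hbddm ⟨M', hM', rfl⟩
    rw [hMcard, hCW]
    exact h2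
  -- canonical decomposition of edges
  have key : ∀ e : Sym2 V, e = s(e.out.1, e.out.2) := fun e => (Quot.out_eq e).symm
  have hout_ne : ∀ e ∈ M, e.out.1 ≠ e.out.2 := by
    intro e he
    have hedge : e ∈ G.edgeSet := hM.1.1 he
    rw [key e] at hedge
    exact (G.mem_edgeSet.mp hedge).ne
  have hadj_out : ∀ e ∈ M, G.Adj e.out.1 e.out.2 := by
    intro e he
    have hedge : e ∈ G.edgeSet := hM.1.1 he
    rw [key e] at hedge
    exact G.mem_edgeSet.mp hedge
  have hone : ∀ S : Set V, IsMaxIndepSet G S → ∀ e ∈ M, (e.out.1 ∈ S ↔ e.out.2 ∉ S) := by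
    intro S hS e he
    exact exactly_one hM hmax hA hS ((key e) ▸ he)
  -- Part A : coverNumber G = M.ncard
  have hcov_lb : ∀ C : Set V, IsVertexCover G C → M.ncard ≤ C.ncard := by
    intro C hC
    have hfex : ∀ e : Sym2 V, ∃ w, e ∈ M → w ∈ e ∧ w ∈ C := by
      intro e
      by_cases he : e ∈ M
      · have hadj := hadj_out e he
        rcases hC hadj with h | h
        · exact ⟨e.out.1, fun _ => ⟨Sym2.out_fst_mem e, h⟩⟩
        · exact ⟨e.out.2, fun _ => ⟨Sym2.out_snd_mem e, h⟩⟩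
      · exact ⟨e.out.1, fun h => absurd h he⟩
    choose f hfspec using hfex
    have hinj : Set.InjOn f M := by
      intro e he e' he' hfe
      by_contra hne
      exact hM.1.2 e he e' he' hne (f e) (hfspec e he).1 (hfe ▸ (hfspec e' he').1)
    calc M.ncard = (f '' M).ncard := (Set.ncard_image_of_injOn hinj).symm
      _ ≤ C.ncard := Set.ncard_le_ncard
          (by rintro w ⟨e, he, rfl⟩; exact (hfspec e he).2) (Set.toFinite _)
  have hpex : ∀ e : Sym2 V, ∃ w, w ∈ e ∧
      (e ∈ M → ∀ x y, G.Adj x y → x ∈ e → y ∉ e → x = w) := by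
    intro e
    by_cases hcase : ∃ w, w ∈ e ∧ ∃ w', G.Adj w w' ∧ w' ∉ e
    · obtain ⟨w, hwe, w', hww', hw'e⟩ := hcase
      refine ⟨w, hwe, fun heM x y hxy hxe hye => ?_⟩
      by_contra hxw
      have hexw : e = s(x, w) := (Sym2.mem_and_mem_iff hxw).mp ⟨hxe, hwe⟩
      rw [hexw] at heM hye hw'e
      exact both_ends_lemma hM hmax hA heM hxy hww' hye hw'e
    · refine ⟨e.out.1, Sym2.out_fst_mem e, fun heM x y hxy hxe hye => ?_⟩
      exact absurd ⟨x, hxe, y, hxy, hye⟩ hcase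
  choose p hp1 hp2 using hpex
  have hC0cover : IsVertexCover G (p '' M) := by
    intro x y hxy
    rcases cover_lemma hM hmax hxy with ⟨e, heM, hxe⟩ | ⟨e, heM, hye⟩
    · by_cases hye : y ∈ e
      · have hexy : e = s(x, y) := (Sym2.mem_and_mem_iff hxy.ne).mp ⟨hxe, hye⟩
        have hpe : p e ∈ (s(x, y) : Sym2 V) := by rw [← hexy]; exact hp1 e
        rcases Sym2.mem_iff.mp hpe with h | h
        · exact Or.inl ⟨e, heM, h⟩
        · exact Or.inr ⟨e, heM, h⟩
      · exact Or.inl ⟨e, heM, (hp2 e heM x y hxy hxe hye).symm⟩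
    · by_cases hxe : x ∈ e
      · have hexy : e = s(x, y) := (Sym2.mem_and_mem_iff hxy.ne).mp ⟨hxe, hye⟩
        have hpe : p e ∈ (s(x, y) : Sym2 V) := by rw [← hexy]; exact hp1 e
        rcases Sym2.mem_iff.mp hpe with h | h
        · exact Or.inl ⟨e, heM, h⟩
        · exact Or.inr ⟨e, heM, h⟩
      · exact Or.inr ⟨e, heM, (hp2 e heM y x hxy.symm hye hxe).symm⟩
  have hcov : coverNumber G = M.ncard := by
    apply le_antisymm
    · exact le_trans (Nat.sInf_le ⟨p '' M, hC0cover, rfl⟩) (Set.ncard_image_le (Set.toFinite _))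
    · exact le_csInf ⟨(p '' M).ncard, p '' M, hC0cover, rfl⟩
        (by rintro n ⟨C, hC, rfl⟩; exact hcov_lb C hC)
  -- Part B : numMaxIndep G = 2 ^ M.ncard
  have hinjΦ : Set.InjOn (fun S : Set V => {e ∈ M | e.out.1 ∈ S})
      {S : Set V | IsMaxIndepSet G S} := by
    have hsub : ∀ S T : Set V, IsMaxIndepSet G S → IsMaxIndepSet G T →
        {e ∈ M | e.out.1 ∈ S} = {e ∈ M | e.out.1 ∈ T} → S ⊆ T := by
      intro S T hS hT hΦ w hwS
      by_contra hwT
      by_cases hwsupp : ∃ e ∈ M, w ∈ e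
      · obtain ⟨e, heM, hwe⟩ := hwsupp
        rw [key e] at hwe
        rcases Sym2.mem_iff.mp hwe with h1 | h2
        · subst h1
          have hmem : e ∈ {e ∈ M | e.out.1 ∈ S} := ⟨heM, hwS⟩
          rw [hΦ] at hmem
          exact hwT hmem.2
        · subst h2
          have h1S : e.out.1 ∉ S := fun h => (hone S hS e heM).mp h hwS
          have hmem : e ∉ {e ∈ M | e.out.1 ∈ S} := fun h => h1S h.2
          rw [hΦ] at hmem
          have h1T : e.out.1 ∉ T := fun h => hmem ⟨heM, h⟩
          exact h1T ((hone T hT e heM).mpr hwT)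
      · obtain ⟨u, huT, hwu⟩ := maxIndep_dominates hT hwT
        obtain ⟨e, heM, hue⟩ : ∃ e ∈ M, u ∈ e := by
          rcases cover_lemma hM hmax hwu with h | h
          · exact absurd h hwsupp
          · exact h
        have huS : u ∈ S := by
          rw [key e] at hue
          rcases Sym2.mem_iff.mp hue with h1 | h2
          · subst h1
            have hmem : e ∈ {e ∈ M | e.out.1 ∈ T} := ⟨heM, huT⟩
            rw [← hΦ] at hmem
            exact hmem.2
          · subst h2
            have h1T : e.out.1 ∉ T := fun h => (hone T hT e heM).mp h huT
            have hmem : e ∉ {e ∈ M | e.out.1 ∈ T} := fun h => h1T h.2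
            rw [← hΦ] at hmem
            have h1S : e.out.1 ∉ S := fun h => hmem ⟨heM, h⟩
            by_contra huS'
            exact h1S ((hone S hS e heM).mpr huS')
        exact hS.1 hwS huS hwu
    intro S hS T hT hΦ
    exact Set.Subset.antisymm (hsub S T hS hT hΦ) (hsub T S hT hS hΦ.symm)
  have himg : (fun S : Set V => {e ∈ M | e.out.1 ∈ S}) '' {S : Set V | IsMaxIndepSet G S}
      = {T : Set (Sym2 V) | T ⊆ M} := by
    apply Set.Subset.antisymm
    · rintro T ⟨S, _, rfl⟩
      exact Set.sep_subset _ _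
    · intro T hT
      have hC1ind : IsIndepSet G
          ((fun e : Sym2 V => e.out.1) '' T ∪ (fun e : Sym2 V => e.out.2) '' (M \ T)) := by
        rintro x y (⟨e1, he1, rfl⟩ | ⟨e1, he1, rfl⟩) (⟨e2, he2, rfl⟩ | ⟨e2, he2, rfl⟩) hadj
        · rcases eq_or_ne e1 e2 with rfl | hne
          · exact G.loopless.irrefl _ hadj
          · exact hM.2 e1 (hT he1) e2 (hT he2) hne _ _ (Sym2.out_fst_mem e1)
              (Sym2.out_fst_mem e2) hadj
        · rcases eq_or_ne e1 e2 with rfl | hne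
          · exact he2.2 he1
          · exact hM.2 e1 (hT he1) e2 he2.1 hne _ _ (Sym2.out_fst_mem e1)
              (Sym2.out_snd_mem e2) hadj
        · rcases eq_or_ne e1 e2 with rfl | hne
          · exact he1.2 he2
          · exact hM.2 e1 he1.1 e2 (hT he2) hne _ _ (Sym2.out_snd_mem e1)
              (Sym2.out_fst_mem e2) hadj
        · rcases eq_or_ne e1 e2 with rfl | hne
          · exact G.loopless.irrefl _ hadj
          · exact hM.2 e1 he1.1 e2 he2.1 hne _ _ (Sym2.out_snd_mem e1)
              (Sym2.out_snd_mem e2) hadj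
      obtain ⟨S, hSmax, hCS⟩ := exists_maxIndep_superset G hC1ind
      refine ⟨S, hSmax, ?_⟩
      ext e
      constructor
      · rintro ⟨heM, h1⟩
        by_contra heT
        have h2 : e.out.2 ∈ S := hCS (Or.inr ⟨e, ⟨heM, heT⟩, rfl⟩)
        exact hSmax.1 h1 h2 (hadj_out e heM)
      · intro heT
        exact ⟨hT heT, hCS (Or.inl ⟨e, heT, rfl⟩)⟩
  have hpow : {T : Set (Sym2 V) | T ⊆ M}.ncard = 2 ^ M.ncard := by
    have hMfin : M.Finite := Set.toFinite _
    have heq : {T : Set (Sym2 V) | T ⊆ M}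
        = (fun F : Finset (Sym2 V) => (F : Set (Sym2 V))) '' ↑hMfin.toFinset.powerset := by
      ext T
      simp only [Set.mem_setOf_eq, Set.mem_image, Finset.mem_coe, Finset.mem_powerset]
      constructor
      · intro hTM
        refine ⟨(Set.toFinite T).toFinset, ?_, (Set.toFinite T).coe_toFinset⟩
        intro x hx
        simp only [Set.Finite.mem_toFinset] at hx ⊢
        exact hTM hx
      · rintro ⟨F, hF, rfl⟩
        intro x hx
        have := hF hx
        simpa using this
    rw [heq, Set.ncard_image_of_injOn (fun a _ b _ h => Finset.coe_injective h),
      Set.ncard_coe_finset, Finset.card_powerset, ← Set.ncard_eq_toFinset_card M hMfin]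
  have hnum : numMaxIndep G = 2 ^ M.ncard := by
    rw [numMaxIndep, ← hpow, ← himg, Set.ncard_image_of_injOn hinjΦ]
  rw [hnum, hcov]
end
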